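/- Let λ₁,…,λₙ (n ≥ 2) be nonnegative reals with Σᵢ λᵢ² = 1. Define the normalized robustness R̃ = ((Σᵢ λᵢ)² - 1)/(n-1) and normalized concurrence C̃ = √((n/(n-1))(1 - Σᵢ λᵢ⁴)). Then R̃ ≤ C̃. -/

import Mathlib

open Finset

lemma sum_offDiag_eq (n : ℕ) (f : Fin n → ℝ) :
    ∑ p ∈ (univ : Finset (Fin n)).offDiag, f p.1 * f p.2
      = (∑ i, f i) ^ 2 - ∑ i, f i ^ 2 := by
  have h : ∑ p ∈ (univ : Finset (Fin n)).diag, f p.1 * f p.2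
      + ∑ p ∈ (univ : Finset (Fin n)).offDiag, f p.1 * f p.2
      = ∑ p ∈ (univ : Finset (Fin n)) ×ˢ univ, f p.1 * f p.2 := by
    rw [← sum_union (disjoint_diag_offDiag _), diag_union_offDiag]
  have hd : ∑ p ∈ (univ : Finset (Fin n)).diag, f p.1 * f p.2 = ∑ i, f i ^ 2 := by
    rw [Finset.sum_diag]
    exact Finset.sum_congr rfl fun i _ => (sq (f i)).symm
  have hp : ∑ p ∈ (univ : Finset (Fin n)) ×ˢ univ, f p.1 * f p.2 = (∑ i, f i) ^ 2 := by
    rw [Finset.sum_product, sq, Finset.sum_mul_sum]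
  linarith [h, hd, hp]

theorem robustness_le_concurrence (n : ℕ) (hn : 2 ≤ n) (l : Fin n → ℝ)
    (hl : ∀ i, 0 ≤ l i) (hsum : ∑ i, (l i) ^ 2 = 1) :
    ((∑ i, l i) ^ 2 - 1) / ((n : ℝ) - 1) ≤
      Real.sqrt (((n : ℝ) / ((n : ℝ) - 1)) * (1 - ∑ i, (l i) ^ 4)) := by
  have hn1 : (1 : ℝ) < (n : ℝ) := by exact_mod_cast lt_of_lt_of_le one_lt_two hn
  have hn1' : (0 : ℝ) < (n : ℝ) - 1 := by linarith
  set A := ∑ i, l i with hA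
  set T := ∑ i, (l i) ^ 4 with hT
  -- Cauchy-Schwarz on off-diagonal pairs
  have h1 : ∑ p ∈ (univ : Finset (Fin n)).offDiag, l p.1 * l p.2 = A ^ 2 - 1 := by
    rw [sum_offDiag_eq, hsum]
  have h2 : ∑ p ∈ (univ : Finset (Fin n)).offDiag, (l p.1 * l p.2) ^ 2 = 1 - T := by
    have := sum_offDiag_eq n (fun i => (l i) ^ 2)
    simp only [← pow_mul] at this
    calc ∑ p ∈ (univ : Finset (Fin n)).offDiag, (l p.1 * l p.2) ^ 2
        = ∑ p ∈ (univ : Finset (Fin n)).offDiag, (l p.1) ^ 2 * (l p.2) ^ 2 := by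
          exact Finset.sum_congr rfl fun p _ => by ring
      _ = (∑ i, (l i) ^ 2) ^ 2 - ∑ i, (l i) ^ (2 * 2) := this
      _ = 1 - T := by rw [hsum]; norm_num [hT]
  have hcard : ((univ : Finset (Fin n)).offDiag.card : ℝ) = (n : ℝ) * n - n := by
    rw [Finset.offDiag_card]
    simp only [Finset.card_univ, Fintype.card_fin]
    have : n ≤ n * n := Nat.le_mul_of_pos_left n (by omega)
    push_cast [Nat.cast_sub this]
    ring
  have hCS := sq_sum_le_card_mul_sum_sq (s := (univ : Finset (Fin n)).offDiag)
    (f := fun p => l p.1 * l p.2)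
  rw [h1, h2, hcard] at hCS
  have hTle : T ≤ 1 := by
    rw [← hsum]
    apply Finset.sum_le_sum
    intro i _
    have h2i : (l i) ^ 2 ≤ 1 := by
      rw [← hsum]
      exact Finset.single_le_sum (f := fun i => (l i)^2) (fun j _ => sq_nonneg _)
        (Finset.mem_univ i)
    calc (l i) ^ 4 = (l i)^2 * (l i)^2 := by ring
      _ ≤ 1 * (l i)^2 := by nlinarith [sq_nonneg (l i)]
      _ = (l i)^2 := by ring
  have hrhs_nonneg : 0 ≤ ((n : ℝ) / ((n : ℝ) - 1)) * (1 - T) := by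
    apply mul_nonneg (by positivity) (by linarith)
  rcases le_or_gt (A ^ 2 - 1) 0 with h | h
  · calc (A ^ 2 - 1) / ((n:ℝ) - 1) ≤ 0 := div_nonpos_of_nonpos_of_nonneg h hn1'.le
      _ ≤ _ := Real.sqrt_nonneg _
  · rw [Real.le_sqrt (by positivity)]
    rw [div_pow]
    rw [div_le_iff₀ (by positivity)]
    have : (A ^ 2 - 1) ^ 2 ≤ ((n:ℝ) * n - n) * (1 - T) := hCS
    have hexp : ((n:ℝ) / ((n:ℝ) - 1)) * (1 - T) * ((n:ℝ) - 1) ^ 2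
        = ((n:ℝ) * n - n) * (1 - T) := by
      field_simp
    linarith [hexp]
    exact hrhs_nonneg
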